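/- (Graph lemma) Consider a system of word equations on the unknowns Ξ = {x₁, …, x_n} and the graph on vertex set Ξ in which there is an edge between distinct unknowns x and y whenever one of the equations of the system has its left-hand side beginning with x and its right-hand side beginning with y (or vice versa). If this graph has r connected components and h is a solution of the system with h(x_i) ≠ ε for all i, then the rank of h is at most r. -/

import Mathlib

open Polynomial

/-- The characteristic polynomial `P(w)` of a word. -/
noncomputable def wordPoly (w : List ℕ) : Polynomial ℤ :=
  ∑ i ∈ Finset.range w.length, Polynomial.C (w.getD i 0 : ℤ) * Polynomial.X ^ i

/-- Application of a morphism (given by the images of the unknowns) to a word. -/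
def mApply {n : ℕ} {β : Type*} (h : Fin n → List β) (w : List (Fin n)) : List β :=
  (w.map h).flatten

/-- The morphism maps every unknown to a word over the alphabet `A`. -/
def IntoAlph {n : ℕ} (A : Finset ℕ) (h : Fin n → List ℕ) : Prop :=
  ∀ i, ∀ a ∈ h i, a ∈ A

/-- `w` is a product of words from `A`. -/
def InStar (A : Finset (List ℕ)) (w : List ℕ) : Prop :=
  ∃ l : List (List ℕ), (∀ u ∈ l, u ∈ A) ∧ l.flatten = w

/-- The combinatorial rank of a morphism: the smallest `r` such that there is a set of
`r` words whose products contain all images of the unknowns. -/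
noncomputable def mRank {n : ℕ} (h : Fin n → List ℕ) : ℕ :=
  sInf {r | ∃ A : Finset (List ℕ), A.card = r ∧ ∀ i, InStar A (h i)}

/-- The length type of a morphism, as a rational vector. -/
def lenQ {n : ℕ} (h : Fin n → List ℕ) : Fin n → ℚ :=
  fun i => ((h i).length : ℚ)

/-- `|w|_L`: the length of the image of `w` under any morphism of length type `L`. -/
def lenL {n : ℕ} (L : Fin n → ℕ) (w : List (Fin n)) : ℕ :=
  (w.map L).sum

/-- The polynomial `Q_{E,x,L}` for the word equation `u = v`, the unknown `x` and the
length type `L`. -/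
noncomputable def eqPoly {n : ℕ} (u v : List (Fin n)) (x : Fin n) (L : Fin n → ℕ) :
    Polynomial ℤ :=
  (∑ i ∈ Finset.range u.length,
      if u.getD i x = x then (Polynomial.X : Polynomial ℤ) ^ lenL L (u.take i) else 0)
    - ∑ i ∈ Finset.range v.length,
      if v.getD i x = x then (Polynomial.X : Polynomial ℤ) ^ lenL L (v.take i) else 0

/-- Embedding of `ℤ[X]` into the field `ℚ(X)` of rational functions. -/
noncomputable def toRF (p : Polynomial ℤ) : RatFunc ℚ :=
  algebraMap (Polynomial ℚ) (RatFunc ℚ) (p.map (Int.castRingHom ℚ))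

section GraphLemmaProof

open SimpleGraph

private lemma head?_some {α : Type*} {l : List α} {a : α} (h : l.head? = some a) :
    ∃ t, l = a :: t := by
  cases l with
  | nil => simp at h
  | cons b t => simp at h; exact ⟨t, by rw [h]⟩

private lemma mApply_cons {n : ℕ} {β : Type*} (h : Fin n → List β) (a : Fin n)
    (w : List (Fin n)) : mApply h (a :: w) = h a ++ mApply h w := by
  simp [mApply]

private lemma mApply_append {n : ℕ} {β : Type*} (h : Fin n → List β) (w₁ w₂ : List (Fin n)) :
    mApply h (w₁ ++ w₂) = mApply h w₁ ++ mApply h w₂ := by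
  simp [mApply]

private lemma instar_mem {A : Finset (List ℕ)} {w : List ℕ} (hw : w ∈ A) : InStar A w :=
  ⟨[w], by simpa using hw, by simp⟩

private lemma instar_append {A : Finset (List ℕ)} {u v : List ℕ}
    (hu : InStar A u) (hv : InStar A v) : InStar A (u ++ v) := by
  obtain ⟨l1, hl1, rfl⟩ := hu
  obtain ⟨l2, hl2, rfl⟩ := hv
  refine ⟨l1 ++ l2, ?_, by simp⟩
  intro u hu
  rcases List.mem_append.1 hu with hmem | hmem
  exacts [hl1 u hmem, hl2 u hmem]

private lemma mRank_le_card {n : ℕ} (h : Fin n → List ℕ) (A : Finset (List ℕ))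
    (hA : ∀ i, InStar A (h i)) : mRank h ≤ A.card :=
  Nat.sInf_le ⟨A, rfl, hA⟩

private lemma mRank_le_mRank {n n' : ℕ} (h : Fin n → List ℕ) (h' : Fin n' → List ℕ)
    (hc : ∀ A : Finset (List ℕ), (∀ j, InStar A (h' j)) → ∀ i, InStar A (h i)) :
    mRank h ≤ mRank h' := by
  have hset : {r | ∃ A : Finset (List ℕ), A.card = r ∧ ∀ j, InStar A (h' j)}.Nonempty :=
    ⟨_, Finset.image h' Finset.univ, rfl,
      fun j => instar_mem (Finset.mem_image_of_mem h' (Finset.mem_univ j))⟩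
  obtain ⟨A, hcard, hA⟩ := Nat.sInf_mem hset
  calc mRank h ≤ A.card := mRank_le_card h A (hc A hA)
    _ = mRank h' := hcard

private def headGraph {n m : ℕ} (eqs : Fin m → List (Fin n) × List (Fin n)) :
    SimpleGraph (Fin n) where
  Adj x y := x ≠ y ∧ ∃ i : Fin m,
    ((eqs i).1.head? = some x ∧ (eqs i).2.head? = some y) ∨
    ((eqs i).1.head? = some y ∧ (eqs i).2.head? = some x)
  symm := ⟨by rintro a b ⟨hab, i, hi⟩; exact ⟨hab.symm, i, hi.symm⟩⟩
  loopless := ⟨by rintro a ⟨hh, -⟩; exact hh rfl⟩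

private lemma card_cc_le {V V' : Type*} [Finite V] [Finite V'] (G : SimpleGraph V)
    (G' : SimpleGraph V') (f : V → V')
    (hadj : ∀ a b, G.Adj a b → G'.Reachable (f a) (f b))
    (hsurj : ∀ v' : V', ∃ v, G'.Reachable (f v) v') :
    Nat.card G'.ConnectedComponent ≤ Nat.card G.ConnectedComponent := by
  have hreach : ∀ {a b}, G.Reachable a b → G'.Reachable (f a) (f b) := by
    intro a b r
    obtain ⟨w⟩ := r
    induction w with
    | nil => exact SimpleGraph.Reachable.refl _
    | cons ha _ ih => exact (hadj _ _ ha).trans ih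
  let F : G.ConnectedComponent → G'.ConnectedComponent :=
    SimpleGraph.ConnectedComponent.lift (fun v => G'.connectedComponentMk (f v))
      (fun v w p _ => SimpleGraph.ConnectedComponent.sound (hreach ⟨p⟩))
  have hFsurj : Function.Surjective F := by
    intro c'
    induction c' using SimpleGraph.ConnectedComponent.ind with
    | _ v' =>
      obtain ⟨v, hv⟩ := hsurj v'
      exact ⟨G.connectedComponentMk v, SimpleGraph.ConnectedComponent.sound hv⟩
  haveI : Finite G.ConnectedComponent := Quot.finite _
  exact Nat.card_le_card_of_surjective F hFsurj

private lemma card_cc_edgeless {n : ℕ} (G : SimpleGraph (Fin n))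
    (hG : ∀ a b, ¬ G.Adj a b) : Nat.card G.ConnectedComponent = n := by
  have hbij : Function.Bijective G.connectedComponentMk := by
    constructor
    · intro a b hab
      obtain ⟨w⟩ := SimpleGraph.ConnectedComponent.exact hab
      cases w with
      | nil => rfl
      | cons ha _ => exact absurd ha (hG _ _)
    · intro c
      induction c using SimpleGraph.ConnectedComponent.ind with
      | _ v => exact ⟨v, rfl⟩
  rw [← Nat.card_eq_of_bijective _ hbij]
  simp


private lemma case_b {n m : ℕ} (eqs : Fin m → List (Fin n) × List (Fin n))
    (h : Fin n → List ℕ) (hne : ∀ j, h j ≠ [])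
    (hsol : ∀ j, mApply h (eqs j).1 = mApply h (eqs j).2)
    (i : Fin m) (x y : Fin n) (u₀ v₀ : List (Fin n))
    (h1 : (eqs i).1 = x :: u₀) (h2 : (eqs i).2 = y :: v₀)
    (hxy : x ≠ y) (hlt : (h y).length < (h x).length) :
    ∃ (eqs' : Fin m → List (Fin n) × List (Fin n)) (h' : Fin n → List ℕ),
      (∀ j, h' j ≠ []) ∧ (∀ j, mApply h' (eqs' j).1 = mApply h' (eqs' j).2) ∧
      ((∑ j, (h' j).length) < ∑ j, (h j).length) ∧
      Nat.card (headGraph eqs').ConnectedComponent ≤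
        Nat.card (headGraph eqs).ConnectedComponent ∧
      mRank h ≤ mRank h' := by
  have heq : h x ++ mApply h u₀ = h y ++ mApply h v₀ := by
    have hs := hsol i
    rwa [h1, h2, mApply_cons, mApply_cons] at hs
  have hpre : h y <+: h x :=
    List.prefix_of_prefix_length_le ⟨mApply h v₀, heq.symm⟩ ⟨mApply h u₀, rfl⟩ hlt.le
  set d := (h x).drop (h y).length with hd
  have hxd : h y ++ d = h x := by
    obtain ⟨t, ht⟩ := hpre
    rw [hd, ← ht, List.drop_left]
  have hdlen : (h y).length + d.length = (h x).length := by
    have := congrArg List.length hxd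
    simpa using this
  have hdne : d ≠ [] := by
    intro hnil
    rw [hnil] at hdlen
    simp at hdlen
    omega
  set σ : Fin n → Fin n := fun z => if z = x then y else z with hσ
  have hσne : ∀ z, σ z ≠ x := by
    intro z
    by_cases hz : z = x <;> simp [hσ, hz, hxy.symm]
  set τ : List (Fin n) → List (Fin n) :=
    fun w => w.flatMap (fun z => if z = x then [y, x] else [z]) with hτ
  have hτcons : ∀ (a : Fin n) (w : List (Fin n)),
      τ (a :: w) = (if a = x then [y, x] else [a]) ++ τ w := by
    intro a w
    rw [hτ]
    exact List.flatMap_cons ..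
  have hτhead : ∀ (a : Fin n) (w : List (Fin n)), (τ (a :: w)).head? = some (σ a) := by
    intro a w
    rw [hτcons]
    by_cases ha : a = x <;> simp [ha, hσ]
  set h' := Function.update h x d with hh'
  have h'x : h' x = d := by simp [hh']
  have h'o : ∀ z, z ≠ x → h' z = h z := fun z hz => Function.update_of_ne hz _ _
  have hkey : ∀ w, mApply h' (τ w) = mApply h w := by
    intro w
    induction w with
    | nil => simp [hτ, mApply]
    | cons a w ih =>
      rw [hτcons, mApply_append, mApply_cons, ih]
      congr 1
      by_cases ha : a = x
      · rw [if_pos ha, ha]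
        have hm : mApply h' [y, x] = h' y ++ h' x := by simp [mApply]
        rw [hm, h'o y (Ne.symm hxy), h'x, hxd]
      · rw [if_neg ha]
        have hm : mApply h' [a] = h' a := by simp [mApply]
        rw [hm, h'o a ha]
  set eqs' : Fin m → List (Fin n) × List (Fin n) :=
    fun j => if j = i then (x :: τ u₀, τ v₀) else (τ (eqs j).1, τ (eqs j).2) with heqs'
  have heqs'i : eqs' i = (x :: τ u₀, τ v₀) := by simp [heqs']
  have heqs'o : ∀ j, j ≠ i → eqs' j = (τ (eqs j).1, τ (eqs j).2) := by
    intro j hj; simp [heqs', hj]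
  refine ⟨eqs', h', ?_, ?_, ?_, ?_, ?_⟩
  · intro j
    by_cases hj : j = x
    · rw [hj, h'x]; exact hdne
    · rw [h'o j hj]; exact hne j
  · intro j
    by_cases hj : j = i
    · rw [hj, heqs'i]
      show mApply h' (x :: τ u₀) = mApply h' (τ v₀)
      rw [mApply_cons, hkey, hkey, h'x]
      apply List.append_cancel_left (as := h y)
      rw [← List.append_assoc, hxd]
      exact heq
    · rw [heqs'o j hj]
      show mApply h' (τ (eqs j).1) = mApply h' (τ (eqs j).2)
      rw [hkey, hkey]
      exact hsol j
  · have hupd : ∀ j, (h' j).length = Function.update (fun z => (h z).length) x d.length j := by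
      intro j
      by_cases hj : j = x
      · rw [hj, h'x]; simp
      · rw [h'o j hj, Function.update_of_ne hj]
    have hylen : 0 < (h y).length := List.length_pos_iff.2 (hne y)
    calc ∑ j, (h' j).length
        = ∑ j, Function.update (fun z => (h z).length) x d.length j :=
          Finset.sum_congr rfl (fun j _ => hupd j)
      _ = d.length + ∑ j ∈ Finset.univ.erase x, (h j).length := by
          rw [Finset.sum_update_of_mem (Finset.mem_univ x), Finset.erase_eq]
      _ < (h x).length + ∑ j ∈ Finset.univ.erase x, (h j).length := by omega
      _ = ∑ j, (h j).length :=
          Finset.add_sum_erase Finset.univ (fun z => (h z).length) (Finset.mem_univ x)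
  · -- v₀ nonempty
    have hv₀ne : v₀ ≠ [] := by
      intro hnil
      rw [hnil] at heq
      have := congrArg List.length heq
      simp [mApply] at this
      omega
    obtain ⟨c₀, v₁, rfl⟩ : ∃ c₀ v₁, v₀ = c₀ :: v₁ := by
      cases v₀ with
      | nil => exact absurd rfl hv₀ne
      | cons c₀ v₁ => exact ⟨c₀, v₁, rfl⟩
    apply card_cc_le (headGraph eqs) (headGraph eqs') σ
    · rintro a b ⟨hab, j, hj⟩
      have key : ∀ a b : Fin n, (eqs j).1.head? = some a → (eqs j).2.head? = some b →
          (headGraph eqs').Reachable (σ a) (σ b) := by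
        intro a b ha hb
        by_cases hj' : j = i
        · rw [hj', h1] at ha
          rw [hj', h2] at hb
          simp at ha hb
          rw [← ha, ← hb]
          have hσσ : σ x = σ y := by simp [hσ, Ne.symm hxy]
          rw [hσσ]
        · by_cases hs : σ a = σ b
          · rw [hs]
          · apply SimpleGraph.Adj.reachable
            refine ⟨hs, j, Or.inl ⟨?_, ?_⟩⟩
            · obtain ⟨t, ht⟩ := head?_some ha
              rw [heqs'o j hj']
              show (τ (eqs j).1).head? = some (σ a)
              rw [ht]; exact hτhead a t
            · obtain ⟨t, ht⟩ := head?_some hb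
              rw [heqs'o j hj']
              show (τ (eqs j).2).head? = some (σ b)
              rw [ht]; exact hτhead b t
      rcases hj with ⟨ha, hb⟩ | ⟨ha, hb⟩
      · exact key a b ha hb
      · exact (key b a ha hb).symm
    · intro v'
      by_cases hv : v' = x
      · refine ⟨c₀, ?_⟩
        rw [hv]
        apply SimpleGraph.Adj.reachable
        refine ⟨hσne c₀, i, Or.inr ⟨?_, ?_⟩⟩
        · rw [heqs'i]
          rfl
        · rw [heqs'i]
          show (τ (c₀ :: v₁)).head? = some (σ c₀)
          exact hτhead c₀ v₁
      · refine ⟨v', ?_⟩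
        rw [show σ v' = v' from if_neg hv]
  · apply mRank_le_mRank
    intro A hA z
    by_cases hz : z = x
    · rw [hz, ← hxd, ← h'o y (Ne.symm hxy), ← h'x]
      exact instar_append (hA y) (hA x)
    · rw [← h'o z hz]
      exact hA z


private lemma case_a {n m : ℕ} (eqs : Fin m → List (Fin (n+1)) × List (Fin (n+1)))
    (h : Fin (n+1) → List ℕ) (hne : ∀ j, h j ≠ [])
    (hsol : ∀ j, mApply h (eqs j).1 = mApply h (eqs j).2)
    (x y : Fin (n+1)) (hxy : x ≠ y) (hxyeq : h x = h y) :
    ∃ (eqs' : Fin m → List (Fin n) × List (Fin n)) (h' : Fin n → List ℕ),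
      (∀ j, h' j ≠ []) ∧ (∀ j, mApply h' (eqs' j).1 = mApply h' (eqs' j).2) ∧
      ((∑ j, (h' j).length) < ∑ j, (h j).length) ∧
      Nat.card (headGraph eqs').ConnectedComponent ≤
        Nat.card (headGraph eqs).ConnectedComponent ∧
      mRank h ≤ mRank h' := by
  set e : Equiv.Perm (Fin (n+1)) := Equiv.swap x (Fin.last n) with he
  have helast : e (Fin.last n) = x := Equiv.swap_apply_right x (Fin.last n)
  have hex : e x = Fin.last n := Equiv.swap_apply_left x (Fin.last n)
  have hee : ∀ z, e (e z) = z := fun z => Equiv.swap_apply_self x (Fin.last n) z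
  set σ : Fin (n+1) → Fin (n+1) := fun z => if z = x then y else z with hσ
  have hσne : ∀ z, σ z ≠ x := by
    intro z
    by_cases hz : z = x <;> simp [hσ, hz, hxy.symm]
  have hσo : ∀ z, z ≠ x → σ z = z := by intro z hz; simp [hσ, hz]
  have hhσ : ∀ z, h (σ z) = h z := by
    intro z
    by_cases hz : z = x
    · rw [hz]; show h (σ x) = h x; simp [hσ]; exact hxyeq.symm
    · rw [hσo z hz]
  have hπaux : ∀ z, e (σ z) ≠ Fin.last n := by
    intro z hcon
    have := congrArg e hcon
    rw [hee, helast] at this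
    exact hσne z this
  set π : Fin (n+1) → Fin n := fun z => (e (σ z)).castPred (hπaux z) with hπ
  set ι : Fin n → Fin (n+1) := fun j => e j.castSucc with hι
  have hιx : ∀ j, ι j ≠ x := by
    intro j hcon
    have := congrArg e hcon
    rw [hι] at this
    simp only [hee] at this
    rw [hex] at this
    exact (Fin.castSucc_lt_last j).ne this
  have hιπ : ∀ z, ι (π z) = σ z := by
    intro z
    rw [hι, hπ]
    simp only [Fin.castSucc_castPred]
    exact hee _
  have hπι : ∀ j, π (ι j) = j := by
    intro j
    have h1 : ι (π (ι j)) = σ (ι j) := hιπ (ι j)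
    rw [hσo _ (hιx j)] at h1
    have : e (π (ι j)).castSucc = e j.castSucc := h1
    have h2 := e.injective this
    exact Fin.castSucc_injective _ h2
  set h' : Fin n → List ℕ := fun j => h (ι j) with hh'
  have hπval : ∀ z, h' (π z) = h z := by
    intro z
    rw [hh']
    show h (ι (π z)) = h z
    rw [hιπ]
    exact hhσ z
  set eqs' : Fin m → List (Fin n) × List (Fin n) :=
    fun j => ((eqs j).1.map π, (eqs j).2.map π) with heqs'
  have hkey : ∀ w, mApply h' (w.map π) = mApply h w := by
    intro w
    induction w with
    | nil => simp [mApply]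
    | cons a w ih => rw [List.map_cons, mApply_cons, mApply_cons, hπval, ih]
  refine ⟨eqs', h', ?_, ?_, ?_, ?_, ?_⟩
  · intro j
    exact hne (ι j)
  · intro j
    show mApply h' ((eqs j).1.map π) = mApply h' ((eqs j).2.map π)
    rw [hkey, hkey]
    exact hsol j
  · have hsum : ∑ z, (h z).length = (∑ j, (h' j).length) + (h x).length := by
      rw [← Equiv.sum_comp e (fun z => (h z).length), Fin.sum_univ_castSucc]
      congr 1
      rw [helast]
    have hxlen : 0 < (h x).length := List.length_pos_iff.2 (hne x)
    omega
  · apply card_cc_le (headGraph eqs) (headGraph eqs') π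
    · rintro a b ⟨hab, j, hj⟩
      have key : ∀ a b : Fin (n+1), (eqs j).1.head? = some a → (eqs j).2.head? = some b →
          (headGraph eqs').Reachable (π a) (π b) := by
        intro a b ha hb
        by_cases hs : π a = π b
        · rw [hs]
        · apply SimpleGraph.Adj.reachable
          refine ⟨hs, j, Or.inl ⟨?_, ?_⟩⟩
          · show ((eqs j).1.map π).head? = some (π a)
            rw [List.head?_map, ha]
            rfl
          · show ((eqs j).2.map π).head? = some (π b)
            rw [List.head?_map, hb]
            rfl
      rcases hj with ⟨ha, hb⟩ | ⟨ha, hb⟩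
      · exact key a b ha hb
      · exact (key b a ha hb).symm
    · intro v'
      exact ⟨ι v', by rw [hπι]⟩
  · apply mRank_le_mRank
    intro A hA z
    rw [← hπval z]
    exact hA (π z)


private lemma graph_lemma_aux : ∀ (N n m : ℕ) (eqs : Fin m → List (Fin n) × List (Fin n))
    (h : Fin n → List ℕ), (∑ j, (h j).length) = N → (∀ j, h j ≠ []) →
    (∀ j, mApply h (eqs j).1 = mApply h (eqs j).2) →
    mRank h ≤ Nat.card (headGraph eqs).ConnectedComponent := by
  intro N
  induction N using Nat.strong_induction_on with
  | _ N IH =>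
    intro n m eqs h hN hne hsol
    by_cases hex : ∃ (i : Fin m) (x y : Fin n), x ≠ y ∧
        (eqs i).1.head? = some x ∧ (eqs i).2.head? = some y
    · obtain ⟨i, x, y, hxy, hx, hy⟩ := hex
      obtain ⟨u₀, hu₀⟩ := head?_some hx
      obtain ⟨v₀, hv₀⟩ := head?_some hy
      rcases lt_trichotomy (h y).length (h x).length with hlt | heqlen | hlt
      · obtain ⟨eqs', h', c1, c2, c3, c4, c5⟩ :=
          case_b eqs h hne hsol i x y u₀ v₀ hu₀ hv₀ hxy hlt
        exact c5.trans ((IH _ (hN ▸ c3) n m eqs' h' rfl c1 c2).trans c4)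
      · have hxev : h x = h y := by
          have heq := hsol i
          rw [hu₀, hv₀, mApply_cons, mApply_cons] at heq
          exact (List.append_inj heq heqlen.symm).1
        obtain ⟨n', rfl⟩ : ∃ n', n = n' + 1 := ⟨n - 1, (Nat.succ_pred_eq_of_pos x.pos).symm⟩
        obtain ⟨eqs', h', c1, c2, c3, c4, c5⟩ := case_a eqs h hne hsol x y hxy hxev
        exact c5.trans ((IH _ (hN ▸ c3) n' m eqs' h' rfl c1 c2).trans c4)
      · set eqsw := Function.update eqs i ((eqs i).2, (eqs i).1) with heqsw
        have hsolw : ∀ j, mApply h (eqsw j).1 = mApply h (eqsw j).2 := by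
          intro j
          by_cases hj : j = i
          · rw [hj, heqsw, Function.update_self]
            exact (hsol i).symm
          · rw [heqsw, Function.update_of_ne hj]
            exact hsol j
        have h1w : (eqsw i).1 = y :: v₀ := by
          rw [heqsw, Function.update_self]; exact hv₀
        have h2w : (eqsw i).2 = x :: u₀ := by
          rw [heqsw, Function.update_self]; exact hu₀
        obtain ⟨eqs', h', c1, c2, c3, c4, c5⟩ :=
          case_b eqsw h hne hsolw i y x v₀ u₀ h1w h2w hxy.symm hlt
        have hgr : headGraph eqsw = headGraph eqs := by
          ext a b
          constructor
          · rintro ⟨hab, j, hj⟩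
            refine ⟨hab, j, ?_⟩
            by_cases hji : j = i
            · subst hji
              rw [heqsw, Function.update_self] at hj
              rcases hj with ⟨p, q⟩ | ⟨p, q⟩
              exacts [Or.inr ⟨q, p⟩, Or.inl ⟨q, p⟩]
            · rwa [heqsw, Function.update_of_ne hji] at hj
          · rintro ⟨hab, j, hj⟩
            refine ⟨hab, j, ?_⟩
            by_cases hji : j = i
            · subst hji
              rw [heqsw, Function.update_self]
              rcases hj with ⟨p, q⟩ | ⟨p, q⟩
              exacts [Or.inr ⟨q, p⟩, Or.inl ⟨q, p⟩]
            · rwa [heqsw, Function.update_of_ne hji]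
        rw [hgr] at c4
        exact c5.trans ((IH _ (hN ▸ c3) n m eqs' h' rfl c1 c2).trans c4)
    · have hadj : ∀ a b, ¬ (headGraph eqs).Adj a b := by
        rintro a b ⟨hab, j, hj⟩
        rcases hj with ⟨ha, hb⟩ | ⟨ha, hb⟩
        · exact hex ⟨j, a, b, hab, ha, hb⟩
        · exact hex ⟨j, b, a, hab.symm, ha, hb⟩
      rw [card_cc_edgeless _ hadj]
      calc mRank h ≤ (Finset.image h Finset.univ).card :=
            mRank_le_card h _
              (fun j => instar_mem (Finset.mem_image_of_mem h (Finset.mem_univ j)))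
        _ ≤ n := Finset.card_image_le.trans (by simp)

end GraphLemmaProof

/-- Graph lemma: consider the graph on the unknowns with an edge between distinct `x` and
`y` whenever some equation of the system has left-hand side beginning with `x` and
right-hand side beginning with `y` (or vice versa). If this graph has `r` connected
components and `h` is a nonerasing solution of the system, then the rank of `h` is at
most `r`. -/
theorem graph_lemma {n m : ℕ}
    (A : Finset ℕ) (hA : ∀ a ∈ A, 0 < a)
    (eqs : Fin m → List (Fin n) × List (Fin n))
    (G : SimpleGraph (Fin n))
    (hG : ∀ x y : Fin n, G.Adj x y ↔ x ≠ y ∧ ∃ i : Fin m,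
      ((eqs i).1.head? = some x ∧ (eqs i).2.head? = some y) ∨
      ((eqs i).1.head? = some y ∧ (eqs i).2.head? = some x))
    (r : ℕ) (hr : Nat.card G.ConnectedComponent = r)
    (h : Fin n → List ℕ) (hh : IntoAlph A h)
    (hne : ∀ i, h i ≠ [])
    (hsol : ∀ i, mApply h (eqs i).1 = mApply h (eqs i).2) :
    mRank h ≤ r := by
  have hGeq : G = headGraph eqs := by
    ext a b
    rw [hG]
    rfl
  calc mRank h ≤ Nat.card (headGraph eqs).ConnectedComponent :=
        graph_lemma_aux _ n m eqs h rfl hne hsol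
    _ = r := by rw [← hGeq, hr]
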